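/- Let (λ_i) satisfy the recurrence λ_{i+1} = ((N+i)/(N+i+1)) λ_i + ((1−p)·1{λ_i ≤ λ*_U} + p λ*)/(N+i+1), with λ₀ = λ*, N ≥ 1, p ∈ [0,1], λ*, λ*_U ∈ (0,1). If 1 − p + p λ* ≤ λ*_U, then λ_i ≤ 1 − p + p λ* for all i, λ_i = (N/(N+i)) λ₀ + ((1−p)i)/(N+i) + (i/(N+i)) p λ*, and λ_i → 1 − p + p λ* as i → ∞. -/

import Mathlib

open Filter

theorem stmt_9 (lam : ℕ → ℝ) (N : ℕ) (p lamStar lamU : ℝ)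
    (hN : 1 ≤ N) (hp : p ∈ Set.Icc (0:ℝ) 1)
    (hlamStar : lamStar ∈ Set.Ioo (0:ℝ) 1) (hlamU : lamU ∈ Set.Ioo (0:ℝ) 1)
    (h0 : lam 0 = lamStar)
    (hrec : ∀ i : ℕ, lam (i + 1) =
      ((N + i : ℝ) / (N + i + 1)) * lam i
        + ((1 - p) * (if lam i ≤ lamU then (1:ℝ) else 0) + p * lamStar) / (N + i + 1))
    (hcase : 1 - p + p * lamStar ≤ lamU) :
    (∀ i : ℕ, lam i ≤ 1 - p + p * lamStar) ∧
    (∀ i : ℕ, lam i = ((N : ℝ) / (N + i)) * lam 0 + ((1 - p) * i) / (N + i)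
        + ((i : ℝ) / (N + i)) * (p * lamStar)) ∧
    Tendsto lam atTop (nhds (1 - p + p * lamStar)) := by
  set c : ℝ := 1 - p + p * lamStar with hc
  have hN1 : (1:ℝ) ≤ (N:ℝ) := by exact_mod_cast hN
  have hpos : ∀ i : ℕ, (0:ℝ) < (N:ℝ) + i := fun i => by
    have : (0:ℝ) ≤ (i:ℝ) := Nat.cast_nonneg i
    linarith
  have hStarle : lamStar ≤ c := by
    have h1 : lamStar ≤ 1 := le_of_lt hlamStar.2
    have hp1 : p ≤ 1 := hp.2
    nlinarith
  -- closed form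
  have key : ∀ i : ℕ, lam i = ((N:ℝ)/(N+i)) * lamStar + ((i:ℝ)/(N+i)) * c := by
    intro i
    induction i with
    | zero =>
      simp [h0]
      field_simp
    | succ i ih =>
      have hle : lam i ≤ c := by
        rw [ih]
        have hposi := hpos i
        have hNN : (0:ℝ) ≤ (N:ℝ)/(N+i) := by positivity
        have hii : (0:ℝ) ≤ (i:ℝ)/(N+i) := by positivity
        have hsum : (N:ℝ)/(N+i) + (i:ℝ)/(N+i) = 1 := by field_simp
        have hac : (N:ℝ)/(N+i) * c + (i:ℝ)/(N+i) * c = c := by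
          rw [← add_mul, hsum, one_mul]
        linarith [mul_le_mul_of_nonneg_left hStarle hNN]
      have hleU : lam i ≤ lamU := le_trans hle hcase
      rw [hrec i, if_pos hleU, ih]
      have hposi := hpos i
      have hposi1 : (0:ℝ) < (N:ℝ) + i + 1 := by linarith
      push_cast
      field_simp
      ring
  refine ⟨?_, ?_, ?_⟩
  · intro i
    rw [key i]
    have hposi := hpos i
    have hNN : (0:ℝ) ≤ (N:ℝ)/(N+i) := by positivity
    have hii : (0:ℝ) ≤ (i:ℝ)/(N+i) := by positivity
    have hsum : (N:ℝ)/(N+i) + (i:ℝ)/(N+i) = 1 := by field_simp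
    have hac : (N:ℝ)/(N+i) * c + (i:ℝ)/(N+i) * c = c := by
      rw [← add_mul, hsum, one_mul]
    linarith [mul_le_mul_of_nonneg_left hStarle hNN]
  · intro i
    rw [key i, h0, hc]
    have hposi := hpos i
    field_simp
    ring
  · have hden : Tendsto (fun i : ℕ => (N:ℝ) + i) atTop atTop :=
      tendsto_atTop_add_const_left _ _ tendsto_natCast_atTop_atTop
    have hf : Tendsto (fun i : ℕ => (N:ℝ)/((N:ℝ)+i)) atTop (nhds 0) :=
      Tendsto.div_atTop tendsto_const_nhds hden
    have hg : Tendsto (fun i : ℕ => (i:ℝ)/((N:ℝ)+i)) atTop (nhds 1) := by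
      have : ∀ i : ℕ, (i:ℝ)/((N:ℝ)+i) = 1 - (N:ℝ)/((N:ℝ)+i) := by
        intro i
        have hposi := hpos i
        field_simp
        ring
      simp only [this]
      simpa using (tendsto_const_nhds (x := (1:ℝ)) (f := atTop)).sub hf
    have hcomb := (hf.mul (tendsto_const_nhds (x := lamStar))).add
      (hg.mul (tendsto_const_nhds (x := c)))
    simp only [zero_mul, one_mul, zero_add] at hcomb
    exact Tendsto.congr (fun i => (key i).symm) hcomb
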